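/- Let $b, s, k$ be positive integers and set $D = (4bs+1)^k + (b(4bs+1)^k + s)^2$. Then $D$ is a positive non-square integer and the fundamental period of the regular continued fraction expansion of $\sqrt{D}$ has length $2k + 1$. -/
import Mathlib


/-- The Gauss-map iterates of `x`: `cfX x 0 = x` and
`cfX x (n+1) = 1 / (cfX x n - ⌊cfX x n⌋)`. -/
noncomputable def cfX (x : ℝ) : ℕ → ℝ
  | 0 => x
  | n + 1 => (cfX x n - ⌊cfX x n⌋)⁻¹

/-- The `n`-th partial quotient of the regular continued fraction of `x`. -/
noncomputable def cfA (x : ℝ) (n : ℕ) : ℤ := ⌊cfX x n⌋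

/-- `p` is a period (from index `1` on) of the continued fraction expansion of `x`. -/
def cfPeriod (x : ℝ) (p : ℕ) : Prop :=
  0 < p ∧ ∀ n, 1 ≤ n → cfA x (n + p) = cfA x n

private lemma floor_aux (d : ℝ) (A P Q c : ℤ) (hd1 : (A:ℝ) < d) (hd2 : d < (A:ℝ) + 1)
    (hQ : 0 < Q) (h1 : c * Q ≤ A + P) (h2 : A + 1 + P ≤ (c+1) * Q) :
    ⌊(d + (P:ℝ)) / (Q:ℝ)⌋ = c := by
  have hQR : (0:ℝ) < (Q:ℝ) := by exact_mod_cast hQ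
  rw [Int.floor_eq_iff]
  constructor
  · rw [le_div_iff₀ hQR]
    have h1' : ((c:ℝ)) * Q ≤ (A:ℝ) + P := by exact_mod_cast h1
    linarith
  · rw [div_lt_iff₀ hQR]
    have h2' : (A:ℝ) + 1 + P ≤ ((c:ℝ)+1) * Q := by exact_mod_cast h2
    linarith

private lemma gstep (d : ℝ) (D P Q c P' Q' : ℤ) (hd : d^2 = (D:ℝ)) (hd0 : 0 ≤ d)
    (hQ : 0 < Q) (hQ' : 0 < Q') (hP' : P' = c * Q - P) (hprod : D - P'^2 = Q * Q')
    (hfl : ⌊(d + (P:ℝ)) / (Q:ℝ)⌋ = c) :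
    ((d + (P:ℝ)) / (Q:ℝ) - (⌊(d + (P:ℝ)) / (Q:ℝ)⌋ : ℤ))⁻¹ = (d + (P':ℝ)) / (Q':ℝ) := by
  rw [hfl]
  have hQR : (0:ℝ) < Q := by exact_mod_cast hQ
  have hQ'R : (0:ℝ) < Q' := by exact_mod_cast hQ'
  have hDP : ((P':ℝ))^2 < (D:ℝ) := by
    have h : P'^2 < D := by nlinarith [mul_pos hQ hQ']
    exact_mod_cast h
  have hdP' : (P':ℝ) < d := by nlinarith
  have hne : d - (P':ℝ) ≠ 0 := by linarith
  have hc : (D:ℝ) - (P':ℝ)^2 = (Q:ℝ) * (Q':ℝ) := by exact_mod_cast hprod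
  have hPc : (P':ℝ) = (c:ℝ) * Q - P := by exact_mod_cast hP'
  have h1 : (d + (P:ℝ))/(Q:ℝ) - (c:ℝ) = (d - (P':ℝ))/(Q:ℝ) := by
    field_simp
    linarith [hPc]
  rw [h1, inv_div, div_eq_div_iff hne (ne_of_gt hQ'R)]
  nlinarith [hd, hc]

private lemma cfX_succ (x : ℝ) (n : ℕ) :
    cfX x (n+1) = (cfX x n - (⌊cfX x n⌋ : ℤ))⁻¹ := rfl


set_option maxHeartbeats 2000000 in
/-- Theorem t2: for `D = (4bs+1)^k + (b(4bs+1)^k + s)^2`, `D` is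
a positive non-square integer and the fundamental period of the continued
fraction of `√D` has length `2k + 1`. -/
theorem period_t2 (b s k : ℕ) (hb : 0 < b) (hs : 0 < s) (hk : 0 < k) :
    let D : ℤ := (4 * (b : ℤ) * s + 1) ^ k +
      ((b : ℤ) * (4 * (b : ℤ) * s + 1) ^ k + s) ^ 2
    0 < D ∧ ¬ IsSquare D ∧
      IsLeast {p : ℕ | cfPeriod (Real.sqrt (D : ℝ)) p} (2 * k + 1) := by
  intro D
  have hDdef : D = (4 * (b : ℤ) * s + 1) ^ k +
      ((b : ℤ) * (4 * (b : ℤ) * s + 1) ^ k + s) ^ 2 := rfl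
  clear_value D
  set B : ℤ := (b:ℤ) with hBdef
  set S : ℤ := (s:ℤ) with hSdef
  set M : ℤ := 4 * B * S + 1 with hMdef
  set A : ℤ := B * M ^ k + S with hAdef
  subst hDdef
  -- basic integer facts
  have hB : 1 ≤ B := by rw [hBdef]; exact_mod_cast hb
  have hS : 1 ≤ S := by rw [hSdef]; exact_mod_cast hs
  clear_value B S M A
  have hM5 : 5 ≤ M := by nlinarith [mul_nonneg (by linarith : (0:ℤ) ≤ 4*B-4) (by linarith : (0:ℤ) ≤ S)]
  have hM0 : (0:ℤ) < M := by linarith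
  have hM1 : (1:ℤ) ≤ M := by linarith
  have hMk : (0:ℤ) < M ^ k := pow_pos hM0 k
  have hMk1 : (1:ℤ) ≤ M ^ k := hMk
  have hA1 : 1 ≤ A := by nlinarith
  have hpow : ∀ p q r : ℕ, p + q = r → M^p * M^q = M^r := by
    intro p q r h; rw [← h, pow_add]
  have hDpos : (0:ℤ) < M ^ k + A ^ 2 := by nlinarith [sq_nonneg A]
  have hDlt : M ^ k + A ^ 2 < (A+1)^2 := by
    have h1 : 1 * M^k ≤ B * M^k := mul_le_mul_of_nonneg_right hB (le_of_lt hMk)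
    nlinarith
  -- the real number d = √D and its bounds
  set d : ℝ := Real.sqrt ((M ^ k + A ^ 2 : ℤ) : ℝ) with hddef
  clear_value d
  have hDR : (0:ℝ) ≤ ((M ^ k + A ^ 2 : ℤ) : ℝ) := by exact_mod_cast le_of_lt hDpos
  have hd2 : d ^ 2 = ((M ^ k + A ^ 2 : ℤ) : ℝ) := by
    rw [hddef]; exact Real.sq_sqrt hDR
  have hd0 : (0:ℝ) ≤ d := by rw [hddef]; exact Real.sqrt_nonneg _
  have hMkR : (0:ℝ) < (M:ℝ)^k := by
    have : ((0:ℤ):ℝ) < ((M^k : ℤ):ℝ) := by exact_mod_cast hMk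
    push_cast at this; exact this
  have hAR : (1:ℝ) ≤ (A:ℝ) := by exact_mod_cast hA1
  have hdl : (A:ℝ) < d := by
    rw [hddef]
    rw [Real.lt_sqrt (by linarith)]
    push_cast
    linarith
  have hdu : d < (A:ℝ) + 1 := by
    rw [hddef]
    rw [Real.sqrt_lt' (by linarith)]
    have h := hDlt
    have h' : ((M^k + A^2 : ℤ):ℝ) < (((A+1)^2 : ℤ):ℝ) := by exact_mod_cast h
    push_cast at h' ⊢
    linarith
  -- floor computations
  have floorT : ∀ i j : ℕ, i + j = k → 1 ≤ j →
      ⌊(d + (A:ℝ)) / ((M^j : ℤ) : ℝ)⌋ = 2 * B * M ^ i := by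
    intro i j hij hj
    have hMj : M ≤ M ^ j := by
      calc M = M ^ 1 := (pow_one M).symm
      _ ≤ M ^ j := pow_le_pow_right₀ hM1 hj
    apply floor_aux d A A (M^j) _ hdl hdu (pow_pos hM0 j)
    · have h := hpow i j k hij
      have e : 2 * B * M ^ i * M ^ j = 2 * B * M ^ k := by rw [mul_assoc, h]
      rw [e, hAdef]; linarith
    · have h := hpow i j k hij
      have e : (2 * B * M ^ i + 1) * M ^ j = 2 * B * M ^ k + M ^ j := by
        rw [add_mul, one_mul, mul_assoc, h]
      rw [e, hAdef]
      have h2s : 2 * S + 1 ≤ M := by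
        nlinarith [mul_nonneg (by linarith : (0:ℤ) ≤ 4*B-2) (by linarith : (0:ℤ) ≤ S)]
      linarith
  have floorU : ∀ i j : ℕ, i + j = k → 1 ≤ j →
      ⌊(d + ((A - 2*S : ℤ):ℝ)) / ((M^j : ℤ) : ℝ)⌋ = 2 * B * M ^ i := by
    intro i j hij hj
    have hMj : M ≤ M ^ j := by
      calc M = M ^ 1 := (pow_one M).symm
      _ ≤ M ^ j := pow_le_pow_right₀ hM1 hj
    apply floor_aux d A (A - 2*S) (M^j) _ hdl hdu (pow_pos hM0 j)
    · have h := hpow i j k hij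
      have e : 2 * B * M ^ i * M ^ j = 2 * B * M ^ k := by rw [mul_assoc, h]
      rw [e, hAdef]; linarith
    · have h := hpow i j k hij
      have e : (2 * B * M ^ i + 1) * M ^ j = 2 * B * M ^ k + M ^ j := by
        rw [add_mul, one_mul, mul_assoc, h]
      rw [e, hAdef]
      linarith
  -- the two step lemmas
  have stepT : ∀ i : ℕ, i < k →
      cfX d (2*i+1) = (d + (A:ℝ)) / ((M^(k-i) : ℤ) : ℝ) →
      cfX d (2*i+2) = (d + ((A - 2*S : ℤ):ℝ)) / ((M^(i+1) : ℤ) : ℝ) := by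
    intro i hik h1
    show cfX d (2*i+1+1) = _
    rw [cfX_succ, h1]
    refine gstep d (M^k + A^2) A (M^(k-i)) (2*B*M^i) (A - 2*S) (M^(i+1)) hd2 hd0
      (pow_pos hM0 _) (pow_pos hM0 _) ?_ ?_ (floorT i (k-i) (by omega) (by omega))
    · have h := hpow i (k-i) k (by omega)
      rw [mul_assoc, h, hAdef]; ring
    · have h := hpow (k-i) (i+1) (k+1) (by omega)
      rw [h, hAdef, pow_succ, hMdef]; ring
  have stepU : ∀ i : ℕ, i < k →
      cfX d (2*i+2) = (d + ((A - 2*S : ℤ):ℝ)) / ((M^(i+1) : ℤ) : ℝ) →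
      cfX d (2*i+3) = (d + (A:ℝ)) / ((M^(k-(i+1)) : ℤ) : ℝ) := by
    intro i hik h1
    show cfX d (2*i+2+1) = _
    rw [cfX_succ, h1]
    refine gstep d (M^k + A^2) (A - 2*S) (M^(i+1)) (2*B*M^(k-(i+1))) A (M^(k-(i+1))) hd2 hd0
      (pow_pos hM0 _) (pow_pos hM0 _) ?_ ?_ (floorU (k-(i+1)) (i+1) (by omega) (by omega))
    · have h := hpow (k-(i+1)) (i+1) k (by omega)
      rw [mul_assoc, h, hAdef]; ring
    · have h := hpow (i+1) (k-(i+1)) k (by omega)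
      rw [h]; ring
  -- the odd-index formula
  have keyOdd : ∀ i : ℕ, i ≤ k → cfX d (2*i+1) = (d + (A:ℝ)) / ((M^(k-i) : ℤ) : ℝ) := by
    intro i
    induction i with
    | zero =>
      intro _
      show cfX d (0+1) = _
      rw [cfX_succ]
      have h0 : cfX d 0 = d := rfl
      rw [h0]
      have hrw : d = (d + ((0:ℤ):ℝ)) / ((1:ℤ):ℝ) := by norm_num
      have : k - 0 = k := Nat.sub_zero k
      rw [this]
      conv_lhs => rw [hrw]
      exact gstep d (M^k + A^2) 0 1 A A (M^k) hd2 hd0 one_pos (pow_pos hM0 _)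
        (by ring) (by ring)
        (floor_aux d A 0 1 A hdl hdu one_pos (by linarith) (by linarith))
    | succ i ih =>
      intro h
      have hik : i < k := by omega
      exact stepU i hik (stepT i hik (ih (le_of_lt hik)))
  have keyEven : ∀ i : ℕ, i < k →
      cfX d (2*i+2) = (d + ((A - 2*S : ℤ):ℝ)) / ((M^(i+1) : ℤ) : ℝ) :=
    fun i hik => stepT i hik (keyOdd i (le_of_lt hik))
  -- explicit value at 2k+1 and one-cycle closure
  have hk1 : cfX d (2*k+1) = (d + (A:ℝ)) / ((1:ℤ):ℝ) := by
    have h := keyOdd k le_rfl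
    rwa [Nat.sub_self, pow_zero] at h
  have hb0 : cfX d 1 = (d + (A:ℝ)) / ((M^k : ℤ) : ℝ) := by
    have h := keyOdd 0 (Nat.zero_le k)
    rwa [Nat.sub_zero] at h
  have hcycle : cfX d (2*k+2) = cfX d 1 := by
    show cfX d (2*k+1+1) = _
    rw [cfX_succ, hk1, hb0]
    exact gstep d (M^k + A^2) A 1 (2*A) A (M^k) hd2 hd0 one_pos (pow_pos hM0 _)
      (by ring) (by ring)
      (floor_aux d A A 1 (2*A) hdl hdu one_pos (by linarith) (by linarith))
  -- periodicity of the Gauss iterates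
  have perX : ∀ m : ℕ, cfX d (m + (2*k+2)) = cfX d (m+1) := by
    intro m
    induction m with
    | zero => simpa using hcycle
    | succ m ih =>
      have e : m + 1 + (2*k+2) = (m + (2*k+2)) + 1 := by omega
      rw [e, cfX_succ, ih]
      exact (cfX_succ d (m+1)).symm
  -- bounding small quotients
  have hlt1 : ∀ e : ℕ, e < k → 2*B*M^e < 2*A := by
    intro e he
    have h1 : M^(e+1) ≤ M^k := pow_le_pow_right₀ hM1 (by omega)
    have h2 : M^e * 1 < M^e * M := by
      apply mul_lt_mul_of_pos_left (by linarith) (pow_pos hM0 e)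
    have h3 : M^e < M^k := by
      calc M^e = M^e * 1 := by ring
      _ < M^e * M := h2
      _ = M^(e+1) := (pow_succ M e).symm
      _ ≤ M^k := h1
    have h4 := mul_lt_mul_of_pos_left h3 (by linarith : (0:ℤ) < 2*B)
    rw [hAdef]; linarith
  have small : ∀ n : ℕ, 1 ≤ n → n ≤ 2*k → cfA d n < 2*A := by
    intro n h1 h2
    rcases Nat.even_or_odd n with he | ho
    · obtain ⟨i, hi⟩ := he
      obtain ⟨j, hj⟩ : ∃ j, i = j + 1 := ⟨i - 1, by omega⟩
      have hjk : j < k := by omega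
      have en : n = 2*j+2 := by omega
      rw [en]
      show ⌊cfX d (2*j+2)⌋ < 2*A
      rw [keyEven j hjk, floorU (k-(j+1)) (j+1) (by omega) (by omega)]
      exact hlt1 _ (by omega)
    · obtain ⟨i, hi⟩ := ho
      have hik : i < k := by omega
      rw [hi]
      show ⌊cfX d (2*i+1)⌋ < 2*A
      rw [keyOdd i (le_of_lt hik), floorT i (k-i) (by omega) (by omega)]
      exact hlt1 _ hik
  have htop : cfA d (2*k+1) = 2*A := by
    show ⌊cfX d (2*k+1)⌋ = 2*A
    rw [hk1]
    exact floor_aux d A A 1 (2*A) hdl hdu one_pos (by linarith) (by linarith)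
  -- assemble
  refine ⟨hDpos, ?_, ?_, ?_⟩
  · rintro ⟨r, hr⟩
    have hr' : M^k + A^2 = |r|^2 := by rw [hr, sq_abs]; ring
    rcases le_or_gt |r| A with h | h
    · nlinarith [abs_nonneg r]
    · nlinarith [abs_nonneg r]
  · refine ⟨by omega, ?_⟩
    intro n hn
    obtain ⟨m, rfl⟩ : ∃ m, n = m + 1 := ⟨n - 1, by omega⟩
    show ⌊cfX d (m + 1 + (2*k+1))⌋ = ⌊cfX d (m+1)⌋
    have e : m + 1 + (2*k+1) = m + (2*k+2) := by omega
    rw [e, perX m]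
  · rintro p ⟨hp0, hper⟩
    by_contra hlt
    push_neg at hlt
    have hn1 : 1 ≤ 2*k+1-p := by omega
    have hh := hper (2*k+1-p) hn1
    have e : 2*k+1-p+p = 2*k+1 := by omega
    rw [e, htop] at hh
    have := small (2*k+1-p) hn1 (by omega)
    omega
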